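/- Let Ω be the cone of positive definite r×r real symmetric matrices and e the identity matrix. The map ι(z,v) = ((z − z^{1/2} v z^{1/2})/2, (z + z^{1/2} v z^{1/2})/2) is a bijection from Ω × {v ∈ Sym(r,ℝ) : e−v and e+v are positive definite} onto Ω × Ω. -/

import Mathlib

open Matrix
open scoped Classical

/-- The square root of a positive semidefinite matrix (junk value `0` otherwise). -/

noncomputable def msqrt {r : ℕ} (A : Matrix (Fin r) (Fin r) ℝ) : Matrix (Fin r) (Fin r) ℝ :=
  if h : A.PosSemidef then
    h.1.eigenvectorUnitary.1 * diagonal (fun i => Real.sqrt (h.1.eigenvalues i)) *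
      (star h.1.eigenvectorUnitary : Matrix (Fin r) (Fin r) ℝ)
  else 0

/-- The polar-type map `ι(z,v) = ((z − z^{1/2}vz^{1/2})/2, (z + z^{1/2}vz^{1/2})/2)`. -/
noncomputable def iotaMap {r : ℕ} (p : Matrix (Fin r) (Fin r) ℝ × Matrix (Fin r) (Fin r) ℝ) :
    Matrix (Fin r) (Fin r) ℝ × Matrix (Fin r) (Fin r) ℝ :=
  ((2:ℝ)⁻¹ • (p.1 - msqrt p.1 * p.2 * msqrt p.1),
   (2:ℝ)⁻¹ • (p.1 + msqrt p.1 * p.2 * msqrt p.1))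

section Aux

variable {r : ℕ}

local notation "M" => Matrix (Fin r) (Fin r) ℝ

lemma posDef_smul_pos {A : M} (hA : A.PosDef) {c : ℝ} (hc : 0 < c) : (c • A).PosDef := by
  exact hA.smul hc

lemma posDef_of_posSemidef_det {A : M} (hA : A.PosSemidef) (hd : A.det ≠ 0) : A.PosDef := by
  exact hA.posDef_iff_det_ne_zero.mpr hd

lemma posDef_conj {A B : M} (hA : A.PosDef) (hB : B.det ≠ 0) (hBs : B.IsSymm) :
    (B * A * B).PosDef := by
  have hBh : Bᴴ = B := by rw [conjTranspose_eq_transpose_of_trivial]; exact hBs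
  have hsd : (B * A * B).PosSemidef := by
    have := hA.posSemidef.conjTranspose_mul_mul_same B
    rwa [hBh] at this
  refine posDef_of_posSemidef_det hsd ?_
  simp only [det_mul]
  have := hA.det_pos
  positivity

lemma msqrt_mul_self {z : M} (hz : z.PosSemidef) : msqrt z * msqrt z = z := by
  rw [msqrt, dif_pos hz]
  have hU : (star hz.1.eigenvectorUnitary : M) * hz.1.eigenvectorUnitary.1 = 1 :=
    Unitary.coe_star_mul_self _
  conv_rhs => rw [hz.1.spectral_theorem]
  rw [Unitary.conjStarAlgAut_apply]
  calc _ = hz.1.eigenvectorUnitary.1 * diagonal (fun i => Real.sqrt (hz.1.eigenvalues i)) *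
      ((star hz.1.eigenvectorUnitary : M) * hz.1.eigenvectorUnitary.1) *
      diagonal (fun i => Real.sqrt (hz.1.eigenvalues i)) * (star hz.1.eigenvectorUnitary : M) := by
        simp only [Matrix.mul_assoc]
    _ = _ := by
        rw [hU, Matrix.mul_one, Matrix.mul_assoc _ (diagonal _) (diagonal _), diagonal_mul_diagonal]
        congr 3
        funext i
        simp [Real.mul_self_sqrt (hz.eigenvalues_nonneg i)]

lemma msqrt_posSemidef {z : M} (hz : z.PosSemidef) : (msqrt z).PosSemidef := by
  rw [msqrt, dif_pos hz]
  have := (posSemidef_diagonal_iff.mpr (fun i => Real.sqrt_nonneg (hz.1.eigenvalues i))).mul_mul_conjTranspose_same hz.1.eigenvectorUnitary.1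
  simpa [Matrix.star_eq_conjTranspose] using this

lemma msqrt_isSymm {z : M} (hz : z.PosSemidef) : (msqrt z).IsSymm := by
  have := (msqrt_posSemidef hz).1
  rwa [Matrix.IsHermitian, conjTranspose_eq_transpose_of_trivial] at this

lemma msqrt_det_ne_zero {z : M} (hz : z.PosDef) : (msqrt z).det ≠ 0 := by
  intro h
  have : z.det = 0 := by
    rw [← msqrt_mul_self hz.posSemidef, det_mul, h, mul_zero]
  exact (ne_of_gt hz.det_pos) this

lemma msqrt_posDef {z : M} (hz : z.PosDef) : (msqrt z).PosDef :=
  posDef_of_posSemidef_det (msqrt_posSemidef hz.posSemidef) (msqrt_det_ne_zero hz)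

lemma conj_cancel {w v : M} (hw : w.det ≠ 0) : w⁻¹ * (w * v * w) * w⁻¹ = v := by
  have hu := isUnit_iff_ne_zero.mpr hw
  rw [← Matrix.mul_assoc, ← Matrix.mul_assoc, Matrix.nonsing_inv_mul _ hu, Matrix.one_mul,
    Matrix.mul_assoc, Matrix.mul_nonsing_inv _ hu, Matrix.mul_one]

lemma conj_cancel' {w v : M} (hw : w.det ≠ 0) : w * (w⁻¹ * v * w⁻¹) * w = v := by
  have hu := isUnit_iff_ne_zero.mpr hw
  rw [← Matrix.mul_assoc, ← Matrix.mul_assoc, Matrix.mul_nonsing_inv _ hu, Matrix.one_mul,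
    Matrix.mul_assoc, Matrix.nonsing_inv_mul _ hu, Matrix.mul_one]

end Aux

/-- `ι` is a bijection from `Ω × ]−e,e[` onto `Ω × Ω`. -/
theorem iota_bijOn {r : ℕ} :
    Set.BijOn (iotaMap (r := r))
      ({z : Matrix (Fin r) (Fin r) ℝ | z.PosDef} ×ˢ
        {v : Matrix (Fin r) (Fin r) ℝ | v.IsSymm ∧ (1 - v).PosDef ∧ (1 + v).PosDef})
      ({x : Matrix (Fin r) (Fin r) ℝ | x.PosDef} ×ˢ
        {y : Matrix (Fin r) (Fin r) ℝ | y.PosDef}) := by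
  refine ⟨?_, ?_, ?_⟩
  · -- MapsTo
    rintro ⟨z, v⟩ ⟨hz, hvs, h1, h2⟩
    have hz : z.PosDef := hz
    have hww : msqrt z * msqrt z = z := msqrt_mul_self hz.posSemidef
    have hws : (msqrt z).IsSymm := msqrt_isSymm hz.posSemidef
    have hwd : (msqrt z).det ≠ 0 := msqrt_det_ne_zero hz
    simp only [Set.mem_prod, Set.mem_setOf_eq, iotaMap]
    constructor
    · have e1 : z - msqrt z * v * msqrt z = msqrt z * (1 - v) * msqrt z := by
        rw [Matrix.mul_sub, Matrix.sub_mul, Matrix.mul_one, hww]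
      rw [e1]
      exact posDef_smul_pos (posDef_conj h1 hwd hws) (by norm_num)
    · have e2 : z + msqrt z * v * msqrt z = msqrt z * (1 + v) * msqrt z := by
        rw [Matrix.mul_add, Matrix.add_mul, Matrix.mul_one, hww]
      rw [e2]
      exact posDef_smul_pos (posDef_conj h2 hwd hws) (by norm_num)
  · -- InjOn
    rintro ⟨z, v⟩ ⟨hz, -, -, -⟩ ⟨z', v'⟩ ⟨hz', -, -, -⟩ heq
    have hz : z.PosDef := hz
    have hz' : z'.PosDef := hz'
    simp only [iotaMap, Prod.mk.injEq] at heq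
    obtain ⟨h1, h2⟩ := heq
    have hzz : z = z' := by
      have h3 : (2:ℝ)⁻¹ • (z - msqrt z * v * msqrt z) + (2:ℝ)⁻¹ • (z + msqrt z * v * msqrt z)
          = (2:ℝ)⁻¹ • (z' - msqrt z' * v' * msqrt z') +
            (2:ℝ)⁻¹ • (z' + msqrt z' * v' * msqrt z') := by rw [h1, h2]
      calc z = (2:ℝ)⁻¹ • (z - msqrt z * v * msqrt z) +
              (2:ℝ)⁻¹ • (z + msqrt z * v * msqrt z) := by module
        _ = (2:ℝ)⁻¹ • (z' - msqrt z' * v' * msqrt z') +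
            (2:ℝ)⁻¹ • (z' + msqrt z' * v' * msqrt z') := h3
        _ = z' := by module
    subst hzz
    have hm : msqrt z * v * msqrt z = msqrt z * v' * msqrt z := by
      have h3 : (2:ℝ)⁻¹ • (z + msqrt z * v * msqrt z) - (2:ℝ)⁻¹ • (z - msqrt z * v * msqrt z)
          = (2:ℝ)⁻¹ • (z + msqrt z * v' * msqrt z) -
            (2:ℝ)⁻¹ • (z - msqrt z * v' * msqrt z) := by rw [h1, h2]
      calc msqrt z * v * msqrt z
          = (2:ℝ)⁻¹ • (z + msqrt z * v * msqrt z) -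
            (2:ℝ)⁻¹ • (z - msqrt z * v * msqrt z) := by module
        _ = (2:ℝ)⁻¹ • (z + msqrt z * v' * msqrt z) -
            (2:ℝ)⁻¹ • (z - msqrt z * v' * msqrt z) := h3
        _ = msqrt z * v' * msqrt z := by module
    have hwd : (msqrt z).det ≠ 0 := msqrt_det_ne_zero hz
    have : v = v' := by
      have := congrArg (fun m => (msqrt z)⁻¹ * m * (msqrt z)⁻¹) hm
      simpa only [conj_cancel hwd] using this
    simp [this]
  · -- SurjOn
    rintro ⟨x, y⟩ ⟨hx, hy⟩
    have hx : x.PosDef := hx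
    have hy : y.PosDef := hy
    have hz : (x + y).PosDef := hx.add hy
    set w := msqrt (x + y) with hwdef
    have hww : w * w = x + y := msqrt_mul_self hz.posSemidef
    have hws : w.IsSymm := msqrt_isSymm hz.posSemidef
    have hwd : w.det ≠ 0 := msqrt_det_ne_zero hz
    have hu := isUnit_iff_ne_zero.mpr hwd
    have hwis : (w⁻¹).IsSymm := by
      rw [Matrix.IsSymm, Matrix.transpose_nonsing_inv, hws.eq]
    have hwid : (w⁻¹).det ≠ 0 := by
      rw [Matrix.det_nonsing_inv, Ring.inverse_eq_inv']
      exact inv_ne_zero hwd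
    have hxs : xᵀ = x := by
      have h' : xᴴ = x := hx.1
      rwa [conjTranspose_eq_transpose_of_trivial] at h'
    have hys : yᵀ = y := by
      have h' : yᴴ = y := hy.1
      rwa [conjTranspose_eq_transpose_of_trivial] at h'
    have hone : w⁻¹ * (x + y) * w⁻¹ = 1 := by
      rw [← hww, ← Matrix.mul_assoc, Matrix.nonsing_inv_mul _ hu, Matrix.one_mul,
        Matrix.mul_nonsing_inv _ hu]
    refine ⟨(x + y, w⁻¹ * (y - x) * w⁻¹), ⟨hz, ?_, ?_, ?_⟩, ?_⟩
    · -- symmetry of v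
      show (w⁻¹ * (y - x) * w⁻¹).IsSymm
      rw [Matrix.IsSymm, Matrix.transpose_mul, Matrix.transpose_mul, Matrix.transpose_sub,
        hxs, hys, hwis.eq, Matrix.mul_assoc]
    · -- 1 - v posdef
      show (1 - w⁻¹ * (y - x) * w⁻¹).PosDef
      have e : (1 : Matrix (Fin r) (Fin r) ℝ) - w⁻¹ * (y - x) * w⁻¹
          = w⁻¹ * (x + x) * w⁻¹ := by
        rw [← hone]; noncomm_ring
      rw [e]
      exact posDef_conj (hx.add hx) hwid hwis
    · -- 1 + v posdef
      show (1 + w⁻¹ * (y - x) * w⁻¹).PosDef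
      have e : (1 : Matrix (Fin r) (Fin r) ℝ) + w⁻¹ * (y - x) * w⁻¹
          = w⁻¹ * (y + y) * w⁻¹ := by
        rw [← hone]; noncomm_ring
      rw [e]
      exact posDef_conj (hy.add hy) hwid hwis
    · -- iotaMap value
      have hm : msqrt (x + y) * (w⁻¹ * (y - x) * w⁻¹) * msqrt (x + y) = y - x := by
        rw [← hwdef]; exact conj_cancel' hwd
      simp only [iotaMap, hm, Prod.mk.injEq]
      constructor
      · module
      · module
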